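/- Let R be a ring, A ⊆ R a finite non-empty set, and r ∈ R* a non-zero-divisor. Suppose x ∈ R satisfies |x·A + r·A| ≤ K·|A| for some K ≥ 1. Then there exist d, d' ∈ A − A with d ≠ 0 such that x·d = r·d', provided |A| > K (so that the count of such pairs, which is at least |A|/K, exceeds the number of degenerate ones). -/

import Mathlib

open Pointwise Finset

/-- If `r` is a non-zero-divisor, `|x·A + r·A| ≤ K|A|` and `|A| > K`, then there exist
`d, d' ∈ A - A` with `d ≠ 0` and `x·d = r·d'`. -/
theorem exists_parallel_difference {R : Type*} [NonUnitalRing R] [DecidableEq R]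
    (A : Finset R) (hA : A.Nonempty) (K : ℝ) (hK : 1 ≤ K) (r x : R)
    (hr : ∀ a : R, a ≠ 0 → r * a ≠ 0 ∧ a * r ≠ 0)
    (hbig : K < (A.card : ℝ))
    (hx : ((x • A + r • A).card : ℝ) ≤ K * A.card) :
    ∃ d ∈ A - A, ∃ d' ∈ A - A, d ≠ 0 ∧ x * d = r * d' := by
  have hcardA : (0:ℝ) < A.card := by
    exact_mod_cast Finset.card_pos.mpr hA
  have hlt : (x • A + r • A).card < (A ×ˢ A).card := by
    have : ((x • A + r • A).card : ℝ) < (A ×ˢ A).card := by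
      rw [Finset.card_product]
      push_cast
      calc ((x • A + r • A).card : ℝ) ≤ K * A.card := hx
        _ < A.card * A.card := by nlinarith
    exact_mod_cast this
  obtain ⟨p, hp, q, hq, hpq, hfeq⟩ :=
    Finset.exists_ne_map_eq_of_card_lt_of_maps_to hlt
      (f := fun p : R × R => x * p.1 + r * p.2)
      (fun p hp => by
        rw [Finset.mem_coe, Finset.mem_product] at hp
        have h1 : x * p.1 ∈ x • A := by
          rw [← smul_eq_mul]; exact Finset.smul_mem_smul_finset hp.1
        have h2 : r * p.2 ∈ r • A := by
          rw [← smul_eq_mul]; exact Finset.smul_mem_smul_finset hp.2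
        exact Finset.mem_coe.mpr (Finset.add_mem_add h1 h2))
  rw [Finset.mem_product] at hp hq
  have ha : p.1 ≠ q.1 := by
    intro h
    apply hpq
    have hb : r * p.2 = r * q.2 := by
      rw [h] at hfeq
      exact add_left_cancel hfeq
    have : p.2 = q.2 := by
      by_contra hne
      have : p.2 - q.2 ≠ 0 := sub_ne_zero.mpr hne
      exact (hr _ this).1 (by rw [mul_sub, hb, sub_self])
    exact Prod.ext h this
  refine ⟨p.1 - q.1, Finset.sub_mem_sub hp.1 hq.1, q.2 - p.2,
    Finset.sub_mem_sub hq.2 hp.2, sub_ne_zero.mpr ha, ?_⟩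
  rw [mul_sub, mul_sub]
  rw [sub_eq_sub_iff_add_eq_add]
  exact hfeq.trans (add_comm _ _)
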